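/- Let r > 0 and c ∈ ℝ with c ≠ 0, and set μ₊ = (r + √(r²+c²))/c and μ₋ = (r − √(r²+c²))/c. Then μ₊·μ₋ = −1 and μ₊ + μ₋ = 2r/c. Moreover, if |c| ≤ r, then |μ₊ − 2r/c| ≤ |c|/(2r) and |μ₋ + c/(2r)| ≤ |c|³/(8r³). -/

import Mathlib

/-- Algebraic identities (4.23) and asymptotic expansions (4.34) for the
slopes `μ₊, μ₋` of the eigenvectors of the plane-wave crystal system. -/
theorem mu_identities_and_expansions
    (r c : ℝ) (hr : 0 < r) (hc : c ≠ 0) :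
    ((r + Real.sqrt (r ^ 2 + c ^ 2)) / c) * ((r - Real.sqrt (r ^ 2 + c ^ 2)) / c) = -1 ∧
    (r + Real.sqrt (r ^ 2 + c ^ 2)) / c + (r - Real.sqrt (r ^ 2 + c ^ 2)) / c = 2 * r / c ∧
    (|c| ≤ r →
      |(r + Real.sqrt (r ^ 2 + c ^ 2)) / c - 2 * r / c| ≤ |c| / (2 * r) ∧
      |(r - Real.sqrt (r ^ 2 + c ^ 2)) / c + c / (2 * r)| ≤ |c| ^ 3 / (8 * r ^ 3)) := by
  set s := Real.sqrt (r ^ 2 + c ^ 2) with hs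
  have hs2 : s ^ 2 = r ^ 2 + c ^ 2 := Real.sq_sqrt (by positivity)
  have hsr : r ≤ s := by
    have h := Real.sqrt_le_sqrt (show r ^ 2 ≤ r ^ 2 + c ^ 2 by nlinarith)
    rwa [Real.sqrt_sq hr.le] at h
  have hc2 : c ^ 2 = (s - r) * (s + r) := by nlinarith
  refine ⟨by field_simp; nlinarith, by field_simp; ring, fun hcr => ⟨?_, ?_⟩⟩
  · have h1 : (r + s) / c - 2 * r / c = (s - r) / c := by ring
    rw [h1, abs_div, abs_of_nonneg (by linarith : (0:ℝ) ≤ s - r),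
      div_le_div_iff₀ (abs_pos.mpr hc) (by positivity)]
    nlinarith [sq_abs c, sq_nonneg (s - r)]
  · have h2 : (r - s) / c + c / (2 * r) = (s - r) ^ 2 / (2 * r * c) := by
      field_simp
      linear_combination hc2
    rw [h2, abs_div, abs_of_nonneg (sq_nonneg _),
      div_le_div_iff₀ (abs_pos.mpr (mul_ne_zero (by positivity) hc)) (by positivity)]
    have h4 : |c| ^ 3 * |c| = c ^ 2 * c ^ 2 := by
      rw [show |c| ^ 3 * |c| = |c| ^ 2 * |c| ^ 2 from by ring, sq_abs]
    have habs : |2 * r * c| = 2 * r * |c| := by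
      rw [abs_mul, abs_of_nonneg (by positivity : (0:ℝ) ≤ 2 * r)]
    rw [habs]
    have h5 : |c| ^ 3 * (2 * r * |c|) = 2 * r * ((s - r) ^ 2 * (s + r) ^ 2) := by
      have : |c| ^ 3 * (2 * r * |c|) = 2 * r * (c ^ 2 * c ^ 2) := by
        rw [← h4]; ring
      rw [this, hc2]; ring
    rw [h5]
    nlinarith [mul_nonneg hr.le (mul_nonneg (sq_nonneg (s - r)) (show (0:ℝ) ≤ (s + r) ^ 2 - (2 * r) ^ 2 by nlinarith))]
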